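/- The operator norm of Π₊(ξ)Π₋(η) is bounded by a constant times (angle(ξ,η) + ⟨ξ⟩⁻¹ + ⟨η⟩⁻¹) for all nonzero ξ, η ∈ ℝ², where angle(ξ,η) denotes the angle between ξ and η. -/

import Mathlib

open Complex Matrix

noncomputable def diracBeta : Matrix (Fin 2) (Fin 2) ℂ := !![1, 0; 0, -1]

noncomputable def diracAlpha1 : Matrix (Fin 2) (Fin 2) ℂ :=
  !![1, 0; 0, -1] * !![0, 1; -1, 0]

noncomputable def diracAlpha2 : Matrix (Fin 2) (Fin 2) ℂ :=
  !![1, 0; 0, -1] * !![0, -I; -I, 0]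

/-- ξ·α + β. -/
noncomputable def diracM (ξ₁ ξ₂ : ℝ) : Matrix (Fin 2) (Fin 2) ℂ :=
  (ξ₁ : ℂ) • diracAlpha1 + (ξ₂ : ℂ) • diracAlpha2 + diracBeta

/-- ⟨ξ⟩ = √(|ξ|²+1). -/
noncomputable def jap (ξ₁ ξ₂ : ℝ) : ℝ := Real.sqrt (ξ₁ ^ 2 + ξ₂ ^ 2 + 1)

/-- Π₊(ξ) = (1/2)(I − ⟨ξ⟩⁻¹(ξ·α+β)). -/
noncomputable def PiPlus (ξ₁ ξ₂ : ℝ) : Matrix (Fin 2) (Fin 2) ℂ :=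
  (1 / 2 : ℂ) • ((1 : Matrix (Fin 2) (Fin 2) ℂ) - ((jap ξ₁ ξ₂)⁻¹ : ℝ) • diracM ξ₁ ξ₂)

/-- Π₋(ξ) = (1/2)(I + ⟨ξ⟩⁻¹(ξ·α+β)). -/
noncomputable def PiMinus (ξ₁ ξ₂ : ℝ) : Matrix (Fin 2) (Fin 2) ℂ :=
  (1 / 2 : ℂ) • ((1 : Matrix (Fin 2) (Fin 2) ℂ) + ((jap ξ₁ ξ₂)⁻¹ : ℝ) • diracM ξ₁ ξ₂)


open scoped Matrix.Norms.L2Operator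

/-- The angle between two nonzero vectors in ℝ². -/
noncomputable def angle2 (ξ₁ ξ₂ η₁ η₂ : ℝ) : ℝ :=
  Real.arccos ((ξ₁ * η₁ + ξ₂ * η₂) /
    (Real.sqrt (ξ₁ ^ 2 + ξ₂ ^ 2) * Real.sqrt (η₁ ^ 2 + η₂ ^ 2)))

/-! ### Auxiliary lemmas -/

noncomputable def Nmat (ξ₁ ξ₂ : ℝ) : Matrix (Fin 2) (Fin 2) ℂ :=
  ((jap ξ₁ ξ₂)⁻¹ : ℝ) • diracM ξ₁ ξ₂

lemma jap_ge_one (ξ₁ ξ₂ : ℝ) : 1 ≤ jap ξ₁ ξ₂ := by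
  rw [jap]
  calc (1:ℝ) = Real.sqrt 1 := Real.sqrt_one.symm
    _ ≤ _ := Real.sqrt_le_sqrt (by nlinarith [sq_nonneg ξ₁, sq_nonneg ξ₂])

lemma jap_pos (ξ₁ ξ₂ : ℝ) : 0 < jap ξ₁ ξ₂ := lt_of_lt_of_le one_pos (jap_ge_one ξ₁ ξ₂)

lemma jap_sq (ξ₁ ξ₂ : ℝ) : jap ξ₁ ξ₂ ^ 2 = ξ₁ ^ 2 + ξ₂ ^ 2 + 1 :=
  Real.sq_sqrt (by nlinarith [sq_nonneg ξ₁, sq_nonneg ξ₂])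

lemma diracM_eq (ξ₁ ξ₂ : ℝ) :
    diracM ξ₁ ξ₂ = !![1, (ξ₁ : ℂ) - I * ξ₂; (ξ₁ : ℂ) + I * ξ₂, -1] := by
  unfold diracM diracAlpha1 diracAlpha2 diracBeta
  ext i j
  fin_cases i <;> fin_cases j <;>
    simp [Matrix.mul_apply, Fin.sum_univ_two, Matrix.add_apply, Matrix.smul_apply] <;> ring

lemma diracM_sq (ξ₁ ξ₂ : ℝ) :
    diracM ξ₁ ξ₂ * diracM ξ₁ ξ₂ = ((ξ₁ ^ 2 + ξ₂ ^ 2 + 1 : ℝ) : ℂ) • 1 := by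
  rw [diracM_eq]
  ext i j
  fin_cases i <;> fin_cases j <;>
    simp [Matrix.mul_apply, Fin.sum_univ_two, Matrix.one_apply, Matrix.smul_apply] <;>
    push_cast <;> ring_nf <;> simp [Complex.I_sq] <;> ring

lemma diracM_herm (ξ₁ ξ₂ : ℝ) : (diracM ξ₁ ξ₂)ᴴ = diracM ξ₁ ξ₂ := by
  rw [diracM_eq]
  ext i j
  fin_cases i <;> fin_cases j <;>
    simp [Matrix.conjTranspose_apply] <;> ring

lemma norm_one_mat : ‖(1 : Matrix (Fin 2) (Fin 2) ℂ)‖ = 1 := norm_one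

lemma norm_of_herm_invol (A : Matrix (Fin 2) (Fin 2) ℂ) (h1 : Aᴴ = A)
    (h2 : A * A = 1) : ‖A‖ = 1 := by
  have h := Matrix.l2_opNorm_conjTranspose_mul_self A
  rw [h1, h2, norm_one_mat] at h
  nlinarith [norm_nonneg A]

lemma real_smul_mat (r : ℝ) (A : Matrix (Fin 2) (Fin 2) ℂ) : r • A = (r : ℂ) • A := by
  ext i j
  simp [Matrix.smul_apply, Complex.real_smul]

lemma Nmat_herm (ξ₁ ξ₂ : ℝ) : (Nmat ξ₁ ξ₂)ᴴ = Nmat ξ₁ ξ₂ := by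
  unfold Nmat
  rw [real_smul_mat, Matrix.conjTranspose_smul, diracM_herm, Complex.star_def,
    Complex.conj_ofReal]

lemma Nmat_sq (ξ₁ ξ₂ : ℝ) : Nmat ξ₁ ξ₂ * Nmat ξ₁ ξ₂ = 1 := by
  have hjne : (jap ξ₁ ξ₂ : ℝ) ≠ 0 := ne_of_gt (jap_pos ξ₁ ξ₂)
  rw [Nmat, real_smul_mat, smul_mul_smul_comm, diracM_sq, smul_smul]
  have h : ((((jap ξ₁ ξ₂)⁻¹ : ℝ) : ℂ) * (((jap ξ₁ ξ₂)⁻¹ : ℝ) : ℂ)) * ((ξ₁ ^ 2 + ξ₂ ^ 2 + 1 : ℝ) : ℂ) = 1 := by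
    have hjc : ((jap ξ₁ ξ₂ : ℝ) : ℂ) ≠ 0 := by exact_mod_cast hjne
    rw [← jap_sq ξ₁ ξ₂]
    push_cast
    field_simp
  rw [h, one_smul]

lemma norm_Nmat (ξ₁ ξ₂ : ℝ) : ‖Nmat ξ₁ ξ₂‖ = 1 :=
  norm_of_herm_invol _ (Nmat_herm ξ₁ ξ₂) (Nmat_sq ξ₁ ξ₂)

lemma PiPlus_eq (ξ₁ ξ₂ : ℝ) : PiPlus ξ₁ ξ₂ = (1/2 : ℂ) • (1 - Nmat ξ₁ ξ₂) := rfl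
lemma PiMinus_eq (ξ₁ ξ₂ : ℝ) : PiMinus ξ₁ ξ₂ = (1/2 : ℂ) • (1 + Nmat ξ₁ ξ₂) := rfl

lemma PiPlus_mul_PiMinus_self (ξ₁ ξ₂ : ℝ) : PiPlus ξ₁ ξ₂ * PiMinus ξ₁ ξ₂ = 0 := by
  have key : ((1 : Matrix (Fin 2) (Fin 2) ℂ) - Nmat ξ₁ ξ₂) * (1 + Nmat ξ₁ ξ₂) = 0 := by
    simp only [sub_mul, mul_add, one_mul, mul_one, Nmat_sq]
    abel
  rw [PiPlus_eq, PiMinus_eq, smul_mul_smul_comm, key, smul_zero]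

lemma norm_PiPlus_le (ξ₁ ξ₂ : ℝ) : ‖PiPlus ξ₁ ξ₂‖ ≤ 1 := by
  have h := norm_sub_le (1 : Matrix (Fin 2) (Fin 2) ℂ) (Nmat ξ₁ ξ₂)
  rw [norm_one_mat, norm_Nmat] at h
  have hhalf : ‖(1/2 : ℂ)‖ = 1/2 := by norm_num
  rw [PiPlus_eq, norm_smul, hhalf]
  linarith

lemma Nmat_decomp (ξ₁ ξ₂ : ℝ) :
    Nmat ξ₁ ξ₂ = ((ξ₁ / jap ξ₁ ξ₂ : ℝ) : ℂ) • diracAlpha1 + ((ξ₂ / jap ξ₁ ξ₂ : ℝ) : ℂ) • diracAlpha2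
      + (((jap ξ₁ ξ₂)⁻¹ : ℝ) : ℂ) • diracBeta := by
  unfold Nmat diracM
  ext i j
  simp [Matrix.smul_apply, Matrix.add_apply, Complex.real_smul, smul_eq_mul]
  push_cast
  ring

lemma norm_dirac_smul (c : ℝ) (A : Matrix (Fin 2) (Fin 2) ℂ) (hA : ‖A‖ = 1) :
    ‖((c : ℂ)) • A‖ = |c| := by
  rw [norm_smul, hA, mul_one, Complex.norm_real, Real.norm_eq_abs]

lemma norm_alpha1 : ‖diracAlpha1‖ = 1 := by
  apply norm_of_herm_invol
  · unfold diracAlpha1; ext i j; fin_cases i <;> fin_cases j <;>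
      simp [Matrix.conjTranspose_apply, Matrix.mul_apply, Fin.sum_univ_two]
  · unfold diracAlpha1; ext i j; fin_cases i <;> fin_cases j <;>
      simp [Matrix.mul_apply, Fin.sum_univ_two, Matrix.one_apply]

lemma norm_alpha2 : ‖diracAlpha2‖ = 1 := by
  apply norm_of_herm_invol
  · unfold diracAlpha2; ext i j; fin_cases i <;> fin_cases j <;>
      simp [Matrix.conjTranspose_apply, Matrix.mul_apply, Fin.sum_univ_two]
  · unfold diracAlpha2; ext i j; fin_cases i <;> fin_cases j <;>
      simp [Matrix.mul_apply, Fin.sum_univ_two, Matrix.one_apply]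

lemma norm_beta : ‖diracBeta‖ = 1 := by
  apply norm_of_herm_invol
  · unfold diracBeta; ext i j; fin_cases i <;> fin_cases j <;>
      simp [Matrix.conjTranspose_apply]
  · unfold diracBeta; ext i j; fin_cases i <;> fin_cases j <;>
      simp [Matrix.mul_apply, Fin.sum_univ_two, Matrix.one_apply]

lemma norm_Nmat_sub (ξ₁ ξ₂ η₁ η₂ : ℝ) :
    ‖Nmat η₁ η₂ - Nmat ξ₁ ξ₂‖ ≤ |η₁ / jap η₁ η₂ - ξ₁ / jap ξ₁ ξ₂|
      + |η₂ / jap η₁ η₂ - ξ₂ / jap ξ₁ ξ₂| + |(jap η₁ η₂)⁻¹ - (jap ξ₁ ξ₂)⁻¹| := by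
  have hd : Nmat η₁ η₂ - Nmat ξ₁ ξ₂
      = ((η₁ / jap η₁ η₂ - ξ₁ / jap ξ₁ ξ₂ : ℝ) : ℂ) • diracAlpha1
        + ((η₂ / jap η₁ η₂ - ξ₂ / jap ξ₁ ξ₂ : ℝ) : ℂ) • diracAlpha2
        + (((jap η₁ η₂)⁻¹ - (jap ξ₁ ξ₂)⁻¹ : ℝ) : ℂ) • diracBeta := by
    rw [Nmat_decomp η₁ η₂, Nmat_decomp ξ₁ ξ₂]
    push_cast
    module
  rw [hd]
  calc ‖_ + _ + _‖ ≤ ‖((η₁ / jap η₁ η₂ - ξ₁ / jap ξ₁ ξ₂ : ℝ) : ℂ) • diracAlpha1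
        + ((η₂ / jap η₁ η₂ - ξ₂ / jap ξ₁ ξ₂ : ℝ) : ℂ) • diracAlpha2‖
        + ‖(((jap η₁ η₂)⁻¹ - (jap ξ₁ ξ₂)⁻¹ : ℝ) : ℂ) • diracBeta‖ := norm_add_le _ _
    _ ≤ ‖((η₁ / jap η₁ η₂ - ξ₁ / jap ξ₁ ξ₂ : ℝ) : ℂ) • diracAlpha1‖
        + ‖((η₂ / jap η₁ η₂ - ξ₂ / jap ξ₁ ξ₂ : ℝ) : ℂ) • diracAlpha2‖
        + ‖(((jap η₁ η₂)⁻¹ - (jap ξ₁ ξ₂)⁻¹ : ℝ) : ℂ) • diracBeta‖ := by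
        gcongr; exact norm_add_le _ _
    _ = _ := by
        rw [norm_dirac_smul _ _ norm_alpha1, norm_dirac_smul _ _ norm_alpha2,
          norm_dirac_smul _ _ norm_beta]

/-- tail estimate: replacing ⟨ξ⟩ by |ξ| in the denominator costs at most ⟨ξ⟩⁻¹. -/
lemma tail_est (ξ₁ ξ₂ : ℝ) (h : ξ₁ ^ 2 + ξ₂ ^ 2 ≠ 0) :
    |ξ₁ / Real.sqrt (ξ₁ ^ 2 + ξ₂ ^ 2) - ξ₁ / jap ξ₁ ξ₂| ≤ (jap ξ₁ ξ₂)⁻¹ := by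
  set r := Real.sqrt (ξ₁ ^ 2 + ξ₂ ^ 2) with hr
  set j := jap ξ₁ ξ₂ with hj
  have hr2 : r ^ 2 = ξ₁ ^ 2 + ξ₂ ^ 2 := Real.sq_sqrt (by positivity)
  have hrpos : 0 < r := by
    apply Real.sqrt_pos.2
    rcases lt_or_eq_of_le (by positivity : (0:ℝ) ≤ ξ₁ ^ 2 + ξ₂ ^ 2) with h' | h'
    · exact h'
    · exact absurd h'.symm h
  have hjpos : 0 < j := jap_pos ξ₁ ξ₂
  have hj1 : 1 ≤ j := jap_ge_one ξ₁ ξ₂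
  have hj2 : j ^ 2 = ξ₁ ^ 2 + ξ₂ ^ 2 + 1 := jap_sq ξ₁ ξ₂
  have hjr : r < j := by nlinarith
  have habs : |ξ₁| ≤ r := by
    rw [← Real.sqrt_sq_eq_abs]
    exact Real.sqrt_le_sqrt (by nlinarith [sq_nonneg ξ₂])
  have heq : ξ₁ / r - ξ₁ / j = ξ₁ * (j - r) / (r * j) := by
    field_simp
  rw [heq, abs_div, abs_mul, abs_of_pos (by positivity : (0:ℝ) < r * j)]
  have hjr1 : j - r ≤ 1 := by nlinarith
  rw [abs_of_pos (by linarith : (0:ℝ) < j - r)]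
  rw [div_le_iff₀ (by positivity)]
  have hre : j⁻¹ * (r * j) = r := by field_simp
  rw [hre]
  calc |ξ₁| * (j - r) ≤ r * 1 := mul_le_mul habs hjr1 (by linarith) (by positivity)
    _ = r := mul_one r

/-- abstract chord-arc estimate on the unit circle. -/
lemma chord_abs (u₁ u₂ v₁ v₂ : ℝ) (hu : u₁ ^ 2 + u₂ ^ 2 = 1) (hv : v₁ ^ 2 + v₂ ^ 2 = 1) :
    |v₁ - u₁| ≤ Real.arccos (u₁ * v₁ + u₂ * v₂) := by
  set c := u₁ * v₁ + u₂ * v₂ with hc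
  have hc1 : -1 ≤ c := by nlinarith [sq_nonneg (u₁ + v₁), sq_nonneg (u₂ + v₂)]
  have hc2 : c ≤ 1 := by nlinarith [sq_nonneg (u₁ - v₁), sq_nonneg (u₂ - v₂)]
  set θ := Real.arccos c with hθ
  have hcos : Real.cos θ = c := Real.cos_arccos hc1 hc2
  have hθ0 : 0 ≤ θ := Real.arccos_nonneg c
  have hθpi : θ ≤ Real.pi := Real.arccos_le_pi c
  have hsin : 0 ≤ Real.sin (θ / 2) :=
    Real.sin_nonneg_of_nonneg_of_le_pi (by linarith) (by linarith [Real.pi_pos])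
  have hcos2 : Real.cos θ = 2 * Real.cos (θ / 2) ^ 2 - 1 := by
    have h2m := Real.cos_two_mul (θ / 2)
    rw [show 2 * (θ / 2) = θ by ring] at h2m
    linarith
  have hpyth := Real.sin_sq_add_cos_sq (θ / 2)
  have hkey : 2 - 2 * c = (2 * Real.sin (θ / 2)) ^ 2 := by
    rw [← hcos]; nlinarith
  have hsinle : 2 * Real.sin (θ / 2) ≤ θ := by
    have hs2 := Real.sin_le (by linarith : 0 ≤ θ / 2)
    linarith
  have hchord : (v₁ - u₁) ^ 2 ≤ (2 * Real.sin (θ / 2)) ^ 2 := by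
    rw [← hkey, hc]; nlinarith [sq_nonneg (u₂ - v₂)]
  have habs : |v₁ - u₁| ≤ 2 * Real.sin (θ / 2) := by
    nlinarith [abs_nonneg (v₁ - u₁), _root_.sq_abs (v₁ - u₁)]
  linarith

/-- chord-arc estimate for the first component. -/
lemma chord_est (ξ₁ ξ₂ η₁ η₂ : ℝ) (hξ : ξ₁ ^ 2 + ξ₂ ^ 2 ≠ 0) (hη : η₁ ^ 2 + η₂ ^ 2 ≠ 0) :
    |η₁ / Real.sqrt (η₁ ^ 2 + η₂ ^ 2) - ξ₁ / Real.sqrt (ξ₁ ^ 2 + ξ₂ ^ 2)|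
      ≤ angle2 ξ₁ ξ₂ η₁ η₂ := by
  have hr2 : (Real.sqrt (ξ₁ ^ 2 + ξ₂ ^ 2)) ^ 2 = ξ₁ ^ 2 + ξ₂ ^ 2 := Real.sq_sqrt (by positivity)
  have hs2 : (Real.sqrt (η₁ ^ 2 + η₂ ^ 2)) ^ 2 = η₁ ^ 2 + η₂ ^ 2 := Real.sq_sqrt (by positivity)
  have hrpos : 0 < Real.sqrt (ξ₁ ^ 2 + ξ₂ ^ 2) := by
    apply Real.sqrt_pos.2
    rcases lt_or_eq_of_le (by positivity : (0:ℝ) ≤ ξ₁ ^ 2 + ξ₂ ^ 2) with h' | h'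
    · exact h'
    · exact absurd h'.symm hξ
  have hspos : 0 < Real.sqrt (η₁ ^ 2 + η₂ ^ 2) := by
    apply Real.sqrt_pos.2
    rcases lt_or_eq_of_le (by positivity : (0:ℝ) ≤ η₁ ^ 2 + η₂ ^ 2) with h' | h'
    · exact h'
    · exact absurd h'.symm hη
  have hu : (ξ₁ / Real.sqrt (ξ₁ ^ 2 + ξ₂ ^ 2)) ^ 2 + (ξ₂ / Real.sqrt (ξ₁ ^ 2 + ξ₂ ^ 2)) ^ 2 = 1 := by
    field_simp
    exact hr2.symm
  have hv : (η₁ / Real.sqrt (η₁ ^ 2 + η₂ ^ 2)) ^ 2 + (η₂ / Real.sqrt (η₁ ^ 2 + η₂ ^ 2)) ^ 2 = 1 := by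
    field_simp
    exact hs2.symm
  have hangle : angle2 ξ₁ ξ₂ η₁ η₂
      = Real.arccos ((ξ₁ / Real.sqrt (ξ₁ ^ 2 + ξ₂ ^ 2)) * (η₁ / Real.sqrt (η₁ ^ 2 + η₂ ^ 2))
        + (ξ₂ / Real.sqrt (ξ₁ ^ 2 + ξ₂ ^ 2)) * (η₂ / Real.sqrt (η₁ ^ 2 + η₂ ^ 2))) := by
    rw [angle2, div_mul_div_comm, div_mul_div_comm, ← add_div]
  rw [hangle]
  exact chord_abs _ _ _ _ hu hv

lemma angle2_swap (ξ₁ ξ₂ η₁ η₂ : ℝ) : angle2 ξ₂ ξ₁ η₂ η₁ = angle2 ξ₁ ξ₂ η₁ η₂ := by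
  unfold angle2
  rw [show ξ₂ * η₂ + ξ₁ * η₁ = ξ₁ * η₁ + ξ₂ * η₂ by ring,
    show ξ₂ ^ 2 + ξ₁ ^ 2 = ξ₁ ^ 2 + ξ₂ ^ 2 by ring,
    show η₂ ^ 2 + η₁ ^ 2 = η₁ ^ 2 + η₂ ^ 2 by ring]

lemma jap_swap (ξ₁ ξ₂ : ℝ) : jap ξ₂ ξ₁ = jap ξ₁ ξ₂ := by
  unfold jap
  rw [show ξ₂ ^ 2 + ξ₁ ^ 2 + 1 = ξ₁ ^ 2 + ξ₂ ^ 2 + 1 by ring]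

/-- combined scalar estimate for one component. -/
lemma comp_est (ξ₁ ξ₂ η₁ η₂ : ℝ) (hξ : ξ₁ ^ 2 + ξ₂ ^ 2 ≠ 0) (hη : η₁ ^ 2 + η₂ ^ 2 ≠ 0) :
    |η₁ / jap η₁ η₂ - ξ₁ / jap ξ₁ ξ₂|
      ≤ angle2 ξ₁ ξ₂ η₁ η₂ + (jap ξ₁ ξ₂)⁻¹ + (jap η₁ η₂)⁻¹ := by
  have h1 := tail_est ξ₁ ξ₂ hξ
  have h2 := tail_est η₁ η₂ hη
  have h3 := chord_est ξ₁ ξ₂ η₁ η₂ hξ hη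
  have := abs_sub_abs_le_abs_sub (η₁ / jap η₁ η₂ - ξ₁ / jap ξ₁ ξ₂) 0
  calc |η₁ / jap η₁ η₂ - ξ₁ / jap ξ₁ ξ₂|
      ≤ |η₁ / jap η₁ η₂ - η₁ / Real.sqrt (η₁ ^ 2 + η₂ ^ 2)|
        + |η₁ / Real.sqrt (η₁ ^ 2 + η₂ ^ 2) - ξ₁ / Real.sqrt (ξ₁ ^ 2 + ξ₂ ^ 2)|
        + |ξ₁ / Real.sqrt (ξ₁ ^ 2 + ξ₂ ^ 2) - ξ₁ / jap ξ₁ ξ₂| := by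
        have := abs_sub_le (η₁ / jap η₁ η₂) (η₁ / Real.sqrt (η₁ ^ 2 + η₂ ^ 2)) (ξ₁ / jap ξ₁ ξ₂)
        have := abs_sub_le (η₁ / Real.sqrt (η₁ ^ 2 + η₂ ^ 2)) (ξ₁ / Real.sqrt (ξ₁ ^ 2 + ξ₂ ^ 2)) (ξ₁ / jap ξ₁ ξ₂)
        linarith
    _ ≤ (jap η₁ η₂)⁻¹ + angle2 ξ₁ ξ₂ η₁ η₂ + (jap ξ₁ ξ₂)⁻¹ := by
        rw [abs_sub_comm (η₁ / jap η₁ η₂)]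
        linarith
    _ = _ := by ring

theorem PiPlus_PiMinus_null_structure :
    ∃ C > 0, ∀ ξ₁ ξ₂ η₁ η₂ : ℝ, (ξ₁, ξ₂) ≠ (0, 0) → (η₁, η₂) ≠ (0, 0) →
      ‖PiPlus ξ₁ ξ₂ * PiMinus η₁ η₂‖
        ≤ C * (angle2 ξ₁ ξ₂ η₁ η₂ + (jap ξ₁ ξ₂)⁻¹ + (jap η₁ η₂)⁻¹) := by
  refine ⟨3, by norm_num, ?_⟩
  intro ξ₁ ξ₂ η₁ η₂ hξ hη
  have hξ' : ξ₁ ^ 2 + ξ₂ ^ 2 ≠ 0 := by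
    intro h
    apply hξ
    have h1 : ξ₁ = 0 := by nlinarith [sq_nonneg ξ₁, sq_nonneg ξ₂]
    have h2 : ξ₂ = 0 := by nlinarith [sq_nonneg ξ₁, sq_nonneg ξ₂]
    simp [h1, h2]
  have hη' : η₁ ^ 2 + η₂ ^ 2 ≠ 0 := by
    intro h
    apply hη
    have h1 : η₁ = 0 := by nlinarith [sq_nonneg η₁, sq_nonneg η₂]
    have h2 : η₂ = 0 := by nlinarith [sq_nonneg η₁, sq_nonneg η₂]
    simp [h1, h2]
  -- step 1: factor through the difference of projections
  have hfac : PiPlus ξ₁ ξ₂ * PiMinus η₁ η₂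
      = PiPlus ξ₁ ξ₂ * ((1/2 : ℂ) • (Nmat η₁ η₂ - Nmat ξ₁ ξ₂)) := by
    have h0 := PiPlus_mul_PiMinus_self ξ₁ ξ₂
    have : PiMinus η₁ η₂ - PiMinus ξ₁ ξ₂ = (1/2 : ℂ) • (Nmat η₁ η₂ - Nmat ξ₁ ξ₂) := by
      rw [PiMinus_eq, PiMinus_eq, ← smul_sub]
      congr 1
      abel
    calc PiPlus ξ₁ ξ₂ * PiMinus η₁ η₂
        = PiPlus ξ₁ ξ₂ * PiMinus η₁ η₂ - PiPlus ξ₁ ξ₂ * PiMinus ξ₁ ξ₂ := by rw [h0, sub_zero]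
      _ = PiPlus ξ₁ ξ₂ * (PiMinus η₁ η₂ - PiMinus ξ₁ ξ₂) := by rw [mul_sub]
      _ = _ := by rw [this]
  have hnorm : ‖PiPlus ξ₁ ξ₂ * PiMinus η₁ η₂‖
      ≤ (1/2) * ‖Nmat η₁ η₂ - Nmat ξ₁ ξ₂‖ := by
    rw [hfac]
    calc ‖PiPlus ξ₁ ξ₂ * ((1/2 : ℂ) • (Nmat η₁ η₂ - Nmat ξ₁ ξ₂))‖
        ≤ ‖PiPlus ξ₁ ξ₂‖ * ‖(1/2 : ℂ) • (Nmat η₁ η₂ - Nmat ξ₁ ξ₂)‖ := norm_mul_le _ _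
      _ ≤ 1 * ‖(1/2 : ℂ) • (Nmat η₁ η₂ - Nmat ξ₁ ξ₂)‖ := by
          apply mul_le_mul_of_nonneg_right (norm_PiPlus_le ξ₁ ξ₂) (norm_nonneg _)
      _ = (1/2) * ‖Nmat η₁ η₂ - Nmat ξ₁ ξ₂‖ := by
          rw [one_mul, norm_smul]
          norm_num
  have hsub := norm_Nmat_sub ξ₁ ξ₂ η₁ η₂
  have hcomp1 := comp_est ξ₁ ξ₂ η₁ η₂ hξ' hη'
  have hcomp2 := comp_est ξ₂ ξ₁ η₂ η₁ (by rwa [add_comm]) (by rwa [add_comm])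
  rw [angle2_swap ξ₁ ξ₂ η₁ η₂, jap_swap ξ₁ ξ₂, jap_swap η₁ η₂] at hcomp2
  have hinv : |(jap η₁ η₂)⁻¹ - (jap ξ₁ ξ₂)⁻¹| ≤ (jap ξ₁ ξ₂)⁻¹ + (jap η₁ η₂)⁻¹ := by
    have h1 : (0:ℝ) ≤ (jap ξ₁ ξ₂)⁻¹ := inv_nonneg.2 (jap_pos ξ₁ ξ₂).le
    have h2 : (0:ℝ) ≤ (jap η₁ η₂)⁻¹ := inv_nonneg.2 (jap_pos η₁ η₂).le
    rw [abs_sub_comm]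
    calc |(jap ξ₁ ξ₂)⁻¹ - (jap η₁ η₂)⁻¹| ≤ |(jap ξ₁ ξ₂)⁻¹| + |(jap η₁ η₂)⁻¹| := abs_sub _ _
      _ = _ := by rw [_root_.abs_of_nonneg h1, _root_.abs_of_nonneg h2]
  have hang : 0 ≤ angle2 ξ₁ ξ₂ η₁ η₂ := Real.arccos_nonneg _
  have h1 : (0:ℝ) ≤ (jap ξ₁ ξ₂)⁻¹ := inv_nonneg.2 (jap_pos ξ₁ ξ₂).le
  have h2 : (0:ℝ) ≤ (jap η₁ η₂)⁻¹ := inv_nonneg.2 (jap_pos η₁ η₂).le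
  linarith
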